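/- Let a = 1/2, b = 0, c = 1, d = 1 (scalar system). The primal SDP maximize tr([c*c, c*d; d*c, d*d][X R; R* W]) subject to X = [a b][X R; R* W][a b]*, [X R; R* W] ⪰ 0, tr W = 1 has optimal value 1, attained at V* = [0 0; 0 1]; and the dual SDP minimize λ subject to [a*pa−p+c², a*pb+cd; b*pa+dc, b*pb+d²−λ] ⪯ 0 has optimal value 1 but the infimum is not attained by any finite p. -/

import Mathlib

open Matrix
open scoped ComplexOrder

/-- Primal SDP values for the scalar system `a = 1/2, b = 0, c = 1, d = 1`:
objective `tr([c*c, c*d; d*c, d*d] V)` over `V ⪰ 0` with `[a b] V [a b]* = X` and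
`tr W = 1`. -/
noncomputable def primalValues : Set ℝ :=
  {r | ∃ V : Matrix (Fin 2) (Fin 2) ℂ, V.PosSemidef ∧
    !![(1 / 2 : ℂ), 0] * V * (!![(1 / 2 : ℂ), 0])ᴴ = !![V 0 0] ∧
    V 1 1 = 1 ∧
    r = ((!![(1 : ℂ), 1; 1, 1] * V).trace).re}

/-- Dual SDP feasible values `λ` for the scalar system `a = 1/2, b = 0, c = 1, d = 1`:
`[a p a − p + c², a p b + c d; b p a + d c, b p b + d² − λ] ⪯ 0`. -/
def dualValues : Set ℝ :=
  {lam | ∃ p : ℝ,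
    (-(!![p / 4 - p + 1, 1; 1, 1 - lam] : Matrix (Fin 2) (Fin 2) ℝ)).PosSemidef}

/-- A real symmetric `2 × 2` matrix with nonnegative diagonal and nonnegative
determinant is positive semidefinite. -/
lemma psd2 (α β γ : ℝ) (hα : 0 ≤ α) (hγ : 0 ≤ γ) (hd : β^2 ≤ α*γ) :
    (!![α, β; β, γ] : Matrix (Fin 2) (Fin 2) ℝ).PosSemidef := by
  rw [posSemidef_iff_dotProduct_mulVec]
  constructor
  · ext i j; fin_cases i <;> fin_cases j <;> simp [conjTranspose, vecHead, vecTail]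
  · intro x
    simp [mulVec, dotProduct, Fin.sum_univ_two]
    rcases eq_or_lt_of_le hα with h|h
    · subst h
      have hβ : β = 0 := by nlinarith
      subst hβ; nlinarith [mul_nonneg hγ (sq_nonneg (x 1))]
    · nlinarith [sq_nonneg (α * x 0 + β * x 1), mul_nonneg (mul_nonneg hα hγ) (sq_nonneg (x 1)),
        mul_pos h h]

/-- Every dual-feasible value is strictly greater than `1`. -/
lemma dual_gt (lam : ℝ) (h : lam ∈ dualValues) : 1 < lam := by
  obtain ⟨p, h⟩ := h
  have q : ∀ x y : ℝ, 0 ≤ (3*p/4 - 1)*x^2 - 2*x*y + (lam - 1)*y^2 := by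
    intro x y
    have := h.dotProduct_mulVec_nonneg ![x, y]
    simp [mulVec, dotProduct, Fin.sum_univ_two] at this
    nlinarith [this]
  have hα : 0 ≤ 3*p/4 - 1 := by have := q 1 0; nlinarith
  rcases eq_or_lt_of_le hα with h0|h0
  · have := q 1 1
    linarith
  · have h2 := q (1 / (3*p/4 - 1)) 1
    have h1 : (3*p/4 - 1) * (1 / (3*p/4 - 1)) = 1 := mul_one_div_cancel h0.ne'
    have e : (3*p/4 - 1) * (1 / (3*p/4 - 1))^2 = 1 / (3*p/4 - 1) := by
      rw [sq, ← mul_assoc, h1, one_mul]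
    rw [e] at h2
    have h3 : 0 < 1 / (3*p/4 - 1) := div_pos one_pos h0
    linarith

/-- Every value strictly greater than `1` is dual feasible. -/
lemma dual_mem (lam : ℝ) (h : 1 < lam) : lam ∈ dualValues := by
  set ε : ℝ := lam - 1 with hε
  have hεpos : 0 < ε := by simp [hε]; linarith
  refine ⟨4/3 * (1 + 1/ε), ?_⟩
  have key : -(!![(4/3 * (1 + 1/ε)) / 4 - (4/3 * (1 + 1/ε)) + 1, 1; 1, 1 - lam] :
      Matrix (Fin 2) (Fin 2) ℝ) = !![1/ε, -1; -1, ε] := by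
    ext i j
    fin_cases i <;> fin_cases j <;>
      simp [vecHead, vecTail] <;> field_simp <;> ring
  rw [key]
  exact psd2 (1/ε) (-1) ε (by positivity) hεpos.le
    (by rw [neg_pow, one_pow, one_div_mul_cancel hεpos.ne']; norm_num)

/-- Every primal value is at most `1`. -/
lemma primal_le (V : Matrix (Fin 2) (Fin 2) ℂ) (hV : V.PosSemidef)
    (hC : !![(1 / 2 : ℂ), 0] * V * (!![(1 / 2 : ℂ), 0])ᴴ = !![V 0 0])
    (hW : V 1 1 = 1) :
    ((!![(1 : ℂ), 1; 1, 1] * V).trace).re ≤ 1 := by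
  have h00 : V 0 0 = 0 := by
    have h := congrFun (congrFun hC 0) 0
    simp [mul_apply, vecMul, conjTranspose, dotProduct, Fin.sum_univ_two,
      Fin.sum_univ_one, map_ofNat] at h
    linear_combination (-4/3 : ℂ) * h
  have key : ∀ s : ℝ, (0:ℝ) ≤ 1 - s * ((V 0 1).re + (V 1 0).re) := by
    intro s
    have h2 := hV.dotProduct_mulVec_nonneg ![(-(s:ℂ)), 1]
    simp [mulVec, dotProduct, Fin.sum_univ_two, h00, hW] at h2
    rw [Complex.le_def] at h2
    obtain ⟨h2, -⟩ := h2
    simp [Complex.add_re, Complex.mul_re] at h2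
    linarith
  set c : ℝ := (V 0 1).re + (V 1 0).re with hc
  have hcle : c ≤ 0 := by
    rcases le_or_gt c 0 with h|h
    · exact h
    · exfalso
      have e : c * (2 / c) = 2 := by field_simp
      have := key (2 / c)
      nlinarith
  have : (!![(1 : ℂ), 1; 1, 1] * V).trace = V 0 0 + V 1 0 + (V 0 1 + V 1 1) := by
    simp [trace, mul_apply, vecMul, dotProduct, Fin.sum_univ_two]
  rw [this]
  simp [h00, hW]
  linarith

/-- The optimal primal point `V* = [0 0; 0 1]`. -/
lemma vstar_feasible :
    (!![(0 : ℂ), 0; 0, 1] : Matrix (Fin 2) (Fin 2) ℂ).PosSemidef ∧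
      !![(1 / 2 : ℂ), 0] * !![(0 : ℂ), 0; 0, 1] * (!![(1 / 2 : ℂ), 0])ᴴ =
        !![(!![(0 : ℂ), 0; 0, 1] : Matrix (Fin 2) (Fin 2) ℂ) 0 0] ∧
      (!![(0 : ℂ), 0; 0, 1] : Matrix (Fin 2) (Fin 2) ℂ) 1 1 = 1 ∧
      ((!![(1 : ℂ), 1; 1, 1] * !![(0 : ℂ), 0; 0, 1]).trace).re = 1 := by
  refine ⟨posSemidef_iff_dotProduct_mulVec.mpr ⟨?_, ?_⟩, ?_, ?_, ?_⟩
  · ext i j; fin_cases i <;> fin_cases j <;> simp [conjTranspose, vecHead, vecTail]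
  · intro x
    simp [mulVec, dotProduct, Fin.sum_univ_two]
    exact star_mul_self_nonneg (x 1)
  · ext i j
    fin_cases i <;> fin_cases j <;>
      simp [mul_apply, vecMul, conjTranspose, dotProduct, Fin.sum_univ_two, Fin.sum_univ_one]
  · simp
  · simp [trace, mul_apply, vecMul, dotProduct, Fin.sum_univ_two]

/-- Example 2 of the paper: the primal optimal value is `1`, attained at
`V* = [0 0; 0 1]`, while the dual optimal value is `1` but is not attained. -/
theorem scalar_example_dual_not_attained :
    IsGreatest primalValues 1 ∧
    ((!![(0 : ℂ), 0; 0, 1] : Matrix (Fin 2) (Fin 2) ℂ).PosSemidef ∧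
      !![(1 / 2 : ℂ), 0] * !![(0 : ℂ), 0; 0, 1] * (!![(1 / 2 : ℂ), 0])ᴴ =
        !![(!![(0 : ℂ), 0; 0, 1] : Matrix (Fin 2) (Fin 2) ℂ) 0 0] ∧
      (!![(0 : ℂ), 0; 0, 1] : Matrix (Fin 2) (Fin 2) ℂ) 1 1 = 1 ∧
      ((!![(1 : ℂ), 1; 1, 1] * !![(0 : ℂ), 0; 0, 1]).trace).re = 1) ∧
    IsGLB dualValues 1 ∧ (1 : ℝ) ∉ dualValues := by
  have hv := vstar_feasible
  refine ⟨⟨⟨!![(0 : ℂ), 0; 0, 1], hv.1, hv.2.1, hv.2.2.1, hv.2.2.2.symm⟩, ?_⟩, hv, ⟨?_, ?_⟩, ?_⟩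
  · rintro r ⟨V, hV, hC, hW, rfl⟩
    exact primal_le V hV hC hW
  · intro lam hlam
    exact (dual_gt lam hlam).le
  · intro b hb
    by_contra hcon
    push_neg at hcon
    have := hb (dual_mem ((1 + b) / 2) (by linarith))
    linarith
  · intro h
    exact absurd (dual_gt 1 h) (lt_irrefl 1)
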